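/- With J_t as above and d = n−t+1, for 1 ≤ ℓ ≤ 2d, the number ν_ℓ of monomials in the minimal generating set G(J_t) whose largest variable index is ℓ equals binom(t+ℓ−2, t−1). -/

import Mathlib

open Finsupp

/-- `transversalGen t d a` says that the exponent vector `a : ℕ →₀ ℕ` (variable indices
`1, …, 2d+t−1`) encodes a monomial in the minimal generating set `G(J_t)`, i.e. a monomial
`z_{i_1}⋯z_{i_q}·z_{j_1}⋯z_{j_r}·z_{k_1}⋯z_{k_s}` with
`1 ≤ i_1 ≤ ⋯ ≤ i_q ≤ d`, `2d+1 ≤ j_1 ≤ ⋯ ≤ j_r ≤ 2d+t−1−q`,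
`d+1 ≤ k_1 ≤ ⋯ ≤ k_s ≤ 2d` and `q + r + s = t`. -/
def transversalGen (t d : ℕ) (a : ℕ →₀ ℕ) : Prop :=
  a.support ⊆ Finset.Icc 1 (2 * d + t - 1) ∧
  (a.sum fun _ m => m) = t ∧
  ∀ ℓ ∈ a.support, 2 * d + 1 ≤ ℓ → ℓ ≤ 2 * d + t - 1 - (∑ ℓ' ∈ Finset.Icc 1 d, a ℓ')

/-- Finsupps supported in a finset `s` with total sum `k` biject with `Sym ↥s k`. -/
noncomputable def finsuppSymEquiv (s : Finset ℕ) (k : ℕ) :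
    {b : ℕ →₀ ℕ // b.support ⊆ s ∧ (b.sum fun _ m => m) = k} ≃ Sym (↥s) k where
  toFun b := ⟨(Finsupp.toMultiset b.1).pmap
      (fun x hx => (⟨x, b.2.1 ((Finsupp.mem_toMultiset _ _).mp hx)⟩ : ↥s))
      (fun _ hx => hx), by
    rw [Multiset.card_pmap, Finsupp.card_toMultiset]; exact b.2.2⟩
  invFun σ := ⟨Multiset.toFinsupp (σ.val.map Subtype.val), by
    constructor
    · intro x hx
      rw [Multiset.toFinsupp_support, Multiset.mem_toFinset, Multiset.mem_map] at hx
      obtain ⟨y, _, rfl⟩ := hx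
      exact y.2
    · have h1 : ((Multiset.toFinsupp (σ.val.map Subtype.val)).sum fun _ m => m)
          = Multiset.card (Finsupp.toMultiset (Multiset.toFinsupp (σ.val.map Subtype.val))) := by
        rw [Finsupp.card_toMultiset]; rfl
      rw [h1, Multiset.toFinsupp_toMultiset, Multiset.card_map, σ.2]⟩
  left_inv := by
    rintro ⟨b, hb⟩
    apply Subtype.ext
    dsimp only
    rw [Multiset.map_pmap]
    simp only [Multiset.pmap_eq_map, Multiset.map_id']
    exact Finsupp.toMultiset_toFinsupp b
  right_inv := by
    rintro ⟨m, hm⟩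
    apply Subtype.ext
    dsimp only
    apply Multiset.map_injective Subtype.val_injective
    rw [Multiset.map_pmap]
    simp only [Multiset.pmap_eq_map, Multiset.map_id']
    exact Multiset.toFinsupp_toMultiset _

/-- Lemma 3.3(a): for `1 ≤ ℓ ≤ 2d` (with `d = n−t+1`), the number `ν_ℓ` of monomials
in the minimal generating set `G(J_t)` whose largest variable index is `ℓ` equals
`C(t+ℓ−2, t−1)`. -/
theorem nu_small_index (n t d ℓ : ℕ) (ht : 1 ≤ t) (htn : t ≤ n) (hd : d = n - t + 1)
    (hℓ1 : 1 ≤ ℓ) (hℓ2 : ℓ ≤ 2 * d) :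
    Nat.card {a : ℕ →₀ ℕ // transversalGen t d a ∧ a.support.sup id = ℓ}
      = (t + ℓ - 2).choose (t - 1) := by
  classical
  set k := t - 1 with hk
  set s := Finset.Icc 1 ℓ with hs
  -- Step 1: the set in question bijects with finsupps supported in `Icc 1 ℓ` of sum `t-1`.
  have e1 : {a : ℕ →₀ ℕ // transversalGen t d a ∧ a.support.sup id = ℓ}
      ≃ {b : ℕ →₀ ℕ // b.support ⊆ s ∧ (b.sum fun _ m => m) = k} := by
    refine
      { toFun := fun a => ⟨a.1 - Finsupp.single ℓ 1, ?_⟩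
        invFun := fun b => ⟨b.1 + Finsupp.single ℓ 1, ?_⟩
        left_inv := ?_
        right_inv := ?_ }
    · -- forward property
      obtain ⟨a, ⟨hsupp, hsum, _⟩, hsup⟩ := a
      dsimp only
      have hmemsub : ∀ x ∈ a.support, x ∈ s := by
        intro x hx
        have h1 : 1 ≤ x := (Finset.mem_Icc.mp (hsupp hx)).1
        have h2 : x ≤ ℓ := by
          have := Finset.le_sup (f := id) hx
          rw [hsup] at this; exact this
        exact Finset.mem_Icc.mpr ⟨h1, h2⟩
      refine ⟨?_, ?_⟩
      · intro x hx
        exact hmemsub x (Finsupp.support_tsub hx)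
      · -- sum of the difference
        have hne : a.support.Nonempty := by
          by_contra h
          rw [Finset.not_nonempty_iff_eq_empty] at h
          rw [h] at hsup
          simp at hsup; omega
        have hℓmem : ℓ ∈ a.support := by
          have := Finset.max'_mem a.support hne
          have h2 : a.support.max' hne = a.support.sup id := by
            rw [Finset.max'_eq_sup']
            exact Finset.sup'_eq_sup hne id
          rw [h2, hsup] at this
          exact this
        have hle : Finsupp.single ℓ 1 ≤ a := by
          rw [Finsupp.single_le_iff]
          exact Nat.one_le_iff_ne_zero.mpr (Finsupp.mem_support_iff.mp hℓmem)
        have hcancel : a - Finsupp.single ℓ 1 + Finsupp.single ℓ 1 = a :=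
          tsub_add_cancel_of_le hle
        rw [← hcancel, Finsupp.sum_add_index' (fun _ => rfl) (fun _ _ _ => rfl),
          Finsupp.sum_single_index rfl] at hsum
        omega
    · -- backward property
      obtain ⟨b, hbs, hbsum⟩ := b
      have hsuppa : (b + Finsupp.single ℓ 1).support ⊆ s := by
        intro x hx
        rcases Finset.mem_union.mp (Finsupp.support_add hx) with h | h
        · exact hbs h
        · have := Finsupp.support_single_subset h
          simp only [Finset.mem_singleton] at this
          rw [this]
          exact Finset.mem_Icc.mpr ⟨hℓ1, le_refl ℓ⟩
      have hxle : ∀ x ∈ (b + Finsupp.single ℓ 1).support, 1 ≤ x ∧ x ≤ ℓ := by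
        intro x hx
        exact Finset.mem_Icc.mp (hsuppa hx)
      refine ⟨⟨?_, ?_, ?_⟩, ?_⟩
      · intro x hx
        have := hxle x hx
        exact Finset.mem_Icc.mpr ⟨this.1, by omega⟩
      · rw [Finsupp.sum_add_index' (fun _ => rfl) (fun _ _ _ => rfl),
          Finsupp.sum_single_index rfl, hbsum]
        omega
      · intro x hx h2d
        have := hxle x hx
        omega
      · apply le_antisymm
        · apply Finset.sup_le
          intro x hx
          exact (hxle x hx).2
        · have hmem : ℓ ∈ (b + Finsupp.single ℓ 1).support := by
            rw [Finsupp.mem_support_iff, Finsupp.add_apply, Finsupp.single_apply]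
            simp
          exact Finset.le_sup (f := id) hmem
    · -- left inverse
      rintro ⟨a, ⟨hsupp, hsum, _⟩, hsup⟩
      apply Subtype.ext
      dsimp only
      have hne : a.support.Nonempty := by
        by_contra h
        rw [Finset.not_nonempty_iff_eq_empty] at h
        rw [h] at hsup
        simp at hsup; omega
      have hℓmem : ℓ ∈ a.support := by
        have := Finset.max'_mem a.support hne
        have h2 : a.support.max' hne = a.support.sup id := by
          rw [Finset.max'_eq_sup']
          exact Finset.sup'_eq_sup hne id
        rw [h2, hsup] at this
        exact this
      have hle : Finsupp.single ℓ 1 ≤ a := by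
        rw [Finsupp.single_le_iff]
        exact Nat.one_le_iff_ne_zero.mpr (Finsupp.mem_support_iff.mp hℓmem)
      exact tsub_add_cancel_of_le hle
    · -- right inverse
      rintro ⟨b, hb⟩
      apply Subtype.ext
      dsimp only
      exact add_tsub_cancel_right b (Finsupp.single ℓ 1)
  -- Step 2: count via `Sym`.
  have e2 := finsuppSymEquiv s k
  rw [Nat.card_congr (e1.trans e2), Nat.card_eq_fintype_card, Sym.card_sym_eq_choose]
  rw [Fintype.card_coe, hs, Nat.card_Icc]
  congr 1
  omega
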